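/- Let X_1, X_2, ... be an i.i.d. sequence of real-valued random variables with common distribution function F, and let F_n denote the empirical distribution function of the first n observations. Fix p ∈ (0,1). Then almost surely, liminf_{n→∞} lq_{F_n}(p) = lq_F(p). -/

import Mathlib

open MeasureTheory ProbabilityTheory Filter

/-- Left quantile of a distribution function `F` at level `p`:
`lq F p = inf {x | F x ≥ p}`. -/
noncomputable def lq (F : ℝ → ℝ) (p : ℝ) : ℝ := sInf {x : ℝ | p ≤ F x}

/-- Right quantile of a distribution function `F` at level `p`:
`rq F p = inf {x | F x > p}`. -/
noncomputable def rq (F : ℝ → ℝ) (p : ℝ) : ℝ := sInf {x : ℝ | p < F x}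

/-- Empirical distribution function of the first `n` observations `X 0, ..., X (n-1)`:
`edf X n ω x = (1/n) * #{i < n | X i ω ≤ x}`. -/
noncomputable def edf {Ω : Type*} (X : ℕ → Ω → ℝ) (n : ℕ) (ω : Ω) (x : ℝ) : ℝ :=
  ((Finset.range n).filter (fun i => X i ω ≤ x)).card / n

open Topology
open scoped NNReal

section aux
variable {Ω : Type*} {X : ℕ → Ω → ℝ} {ω : Ω} {p : ℝ} {n : ℕ}

lemma edf_eq_sum (X : ℕ → Ω → ℝ) (n : ℕ) (ω : Ω) (x : ℝ) :
    edf X n ω x = (∑ i ∈ Finset.range n, (if X i ω ≤ x then (1:ℝ) else 0)) / n := by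
  rw [Finset.sum_boole]; rfl

lemma edf_mono (X : ℕ → Ω → ℝ) (n : ℕ) (ω : Ω) : Monotone (edf X n ω) := by
  intro a b hab
  unfold edf
  rcases Nat.eq_zero_or_pos n with h | h
  · simp [h]
  · have hcard : (((Finset.range n).filter (fun i => X i ω ≤ a)).card : ℝ)
        ≤ (((Finset.range n).filter (fun i => X i ω ≤ b)).card : ℝ) := by
      exact_mod_cast Finset.card_le_card
        (Finset.monotone_filter_right _ (fun i _ (hi : X i ω ≤ a) => le_trans hi hab))
    have hn : (0:ℝ) ≤ n := by positivity
    gcongr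
    
lemma exists_edf_eq_one (hn : n ≠ 0) : ∃ x₀ : ℝ, edf X n ω x₀ = 1 := by
  obtain ⟨x₀, hx₀⟩ := ((Finset.range n).image (fun i => X i ω)).exists_le
  refine ⟨x₀ + 0, ?_⟩
  have : (Finset.range n).filter (fun i => X i ω ≤ x₀ + 0) = Finset.range n := by
    apply Finset.filter_true_of_mem
    intro i hi
    simpa using hx₀ _ (Finset.mem_image_of_mem _ hi)
  rw [edf, this]
  field_simp
  simp
  
lemma nonempty_lq_set (hn : n ≠ 0) (hp1 : p ≤ 1) : {x : ℝ | p ≤ edf X n ω x}.Nonempty := by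
  obtain ⟨x₀, hx₀⟩ := exists_edf_eq_one (X := X) (ω := ω) hn
  exact ⟨x₀, by simp [hx₀, hp1]⟩

lemma exists_le_of_edf_pos {x : ℝ} (h : 0 < edf X n ω x) : ∃ i ∈ Finset.range n, X i ω ≤ x := by
  by_contra hc
  push_neg at hc
  have : (Finset.range n).filter (fun i => X i ω ≤ x) = ∅ :=
    Finset.filter_false_of_mem (fun i hi => not_le.2 (hc i hi))
  rw [edf, this] at h
  simp at h

lemma bddBelow_lq_set (hp0 : 0 < p) : BddBelow {x : ℝ | p ≤ edf X n ω x} := by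
  rcases Nat.eq_zero_or_pos n with h | h
  · have : {x : ℝ | p ≤ edf X n ω x} = ∅ := by
      ext x; simp only [Set.mem_setOf_eq, Set.mem_empty_iff_false, iff_false, not_le]
      subst h; simpa [edf] using hp0
    rw [this]; exact bddBelow_empty
  · obtain ⟨b, hb⟩ := ((Finset.range n).image (fun i => X i ω)).exists_min_image id
      ⟨X 0 ω, Finset.mem_image_of_mem _ (Finset.mem_range.2 h)⟩
    refine ⟨b, fun x hx => ?_⟩
    obtain ⟨i, hi, hix⟩ := exists_le_of_edf_pos (lt_of_lt_of_le hp0 hx)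
    exact le_trans (hb.2 _ (Finset.mem_image_of_mem _ hi)) hix

lemma lq_edf_le {r : ℝ} (hp0 : 0 < p) (h : p ≤ edf X n ω r) : lq (edf X n ω) p ≤ r :=
  csInf_le (bddBelow_lq_set hp0) h

lemma le_lq_edf {r : ℝ} (hn : n ≠ 0) (hp1 : p ≤ 1) (h : edf X n ω r < p) :
    r ≤ lq (edf X n ω) p := by
  apply le_csInf (nonempty_lq_set hn hp1)
  intro y hy
  by_contra hc
  push_neg at hc
  exact absurd (le_trans hy (edf_mono X n ω hc.le)) (not_le.2 h)

end aux

section prob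
variable {Ω : Type*} [MeasurableSpace Ω] {μ : Measure Ω} [IsProbabilityMeasure μ]
  {X : ℕ → Ω → ℝ}

lemma edf_tendsto (hmeas : ∀ i, Measurable (X i))
    (hindep : iIndepFun X μ)
    (hident : ∀ i, IdentDistrib (X i) (X 0) μ μ) (x : ℝ) :
    ∀ᵐ ω ∂μ, Tendsto (fun n => edf X n ω x) atTop (𝓝 ((μ {ω | X 0 ω ≤ x}).toReal)) := by
  classical
  set g : ℝ → ℝ := (Set.Iic x).indicator (fun _ => (1:ℝ)) with hgdef
  set Y : ℕ → Ω → ℝ := fun i => g ∘ X i with hY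
  have hg : Measurable g := measurable_const.indicator measurableSet_Iic
  have hYind : ∀ i, Y i = ({ω | X i ω ≤ x}).indicator (fun _ => (1:ℝ)) := by
    intro i; funext ω
    simp [hY, hgdef, Set.indicator_apply, Set.mem_Iic]
  have hint : Integrable (Y 0) μ := by
    rw [hYind 0]
    exact (integrable_const (1:ℝ)).indicator ((hmeas 0) measurableSet_Iic)
  have hid : ∀ i, IdentDistrib (Y i) (Y 0) μ μ := fun i => (hident i).comp hg
  have hind : Pairwise (Function.onFun (IndepFun · · μ) Y) :=
    fun i j hij => (hindep.indepFun hij).comp hg hg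
  have hmean : μ[Y 0] = (μ {ω | X 0 ω ≤ x}).toReal := by
    have hms : MeasurableSet {ω | X 0 ω ≤ x} := (hmeas 0) measurableSet_Iic
    rw [hYind 0, integral_indicator_const (1:ℝ) hms]
    simp
    rfl
  have hSLLN := strong_law_ae_real Y hint hind hid
  rw [hmean] at hSLLN
  filter_upwards [hSLLN] with ω hω
  have heq : (fun n => edf X n ω x) = fun n => (∑ i ∈ Finset.range n, Y i ω) / n := by
    funext n
    rw [edf_eq_sum]
    simp [hY, hgdef, Set.indicator_apply, Set.mem_Iic]
  rw [heq]
  exact hω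

end prob

section freq
variable {Ω : Type*} [MeasurableSpace Ω] {μ : Measure Ω} [IsProbabilityMeasure μ]
  {X : ℕ → Ω → ℝ}

lemma edf_freq (hmeas : ∀ i, Measurable (X i))
    (hindep : iIndepFun X μ)
    (hident : ∀ i, IdentDistrib (X i) (X 0) μ μ) (x : ℝ)
    (h0 : 0 < (μ {ω | X 0 ω ≤ x}).toReal) (h1 : (μ {ω | X 0 ω ≤ x}).toReal < 1) :
    ∀ᵐ ω ∂μ, ∃ᶠ n in atTop, (μ {ω | X 0 ω ≤ x}).toReal ≤ edf X n ω x := by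
  classical
  set p : ℝ := (μ {ω | X 0 ω ≤ x}).toReal with hpdef
  set g : ℝ → ℝ := (Set.Iic x).indicator (fun _ => (1:ℝ)) with hgdef
  set B : ℕ → Ω → ℝ := fun i => g ∘ X i with hBdef
  set M : ℕ → Ω → ℝ := fun n ω => ∑ i ∈ Finset.range (n+1), (B i ω - p) with hMdef
  have hg : Measurable g := measurable_const.indicator measurableSet_Iic
  have hB01 : ∀ i ω, B i ω = 1 ∨ B i ω = 0 := by
    intro i ω
    by_cases h : X i ω ∈ Set.Iic x
    · left; simp [hBdef, hgdef, Set.indicator_of_mem h]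
    · right; simp [hBdef, hgdef, Set.indicator_of_notMem h]
  have hBind : ∀ i, B i = ({ω | X i ω ≤ x}).indicator (fun _ => (1:ℝ)) := by
    intro i; funext ω
    simp [hBdef, hgdef, Set.indicator_apply, Set.mem_Iic]
  have hmsB : ∀ i, MeasurableSet {ω | X i ω ≤ x} := fun i => (hmeas i) measurableSet_Iic
  have hintB : ∀ i, Integrable (B i) μ := by
    intro i; rw [hBind i]
    exact (integrable_const (1:ℝ)).indicator (hmsB i)
  have hmeanB : ∀ i, μ[B i] = p := by
    intro i
    rw [hBind i, integral_indicator_const (1:ℝ) (hmsB i), smul_eq_mul, mul_one, hpdef]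
    have : {ω | X i ω ≤ x} = X i ⁻¹' Set.Iic x := rfl
    rw [this, show {ω | X 0 ω ≤ x} = X 0 ⁻¹' Set.Iic x from rfl]
    exact congrArg ENNReal.toReal ((hident i).measure_mem_eq measurableSet_Iic)
  have hMdiff : ∀ i ω, M (i+1) ω - M i ω = B (i+1) ω - p := by
    intro i ω
    rw [show M (i+1) ω = M i ω + (B (i+1) ω - p) from Finset.sum_range_succ _ _]
    ring
  -- the natural filtration
  set ℱ := Filtration.natural X (fun i => (hmeas i).stronglyMeasurable) with hFdef
  have hsmB : ∀ i, StronglyMeasurable[MeasurableSpace.comap (X i) Real.measurableSpace] (B i) := by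
    intro i
    have hXi : Measurable[MeasurableSpace.comap (X i) Real.measurableSpace] (X i) :=
      fun s hs => ⟨s, hs, rfl⟩
    exact (hg.comp hXi).stronglyMeasurable
  have hcomap_le : ∀ i n, i ≤ n →
      MeasurableSpace.comap (X i) Real.measurableSpace ≤ ℱ n := by
    intro i n hin
    exact le_biSup (fun j => MeasurableSpace.comap (X j) Real.measurableSpace) hin
  have hadp : StronglyAdapted ℱ M := by
    intro n
    apply Finset.stronglyMeasurable_fun_sum
    intro i hi
    exact ((hsmB i).mono (hcomap_le i n (Nat.lt_succ_iff.1 (Finset.mem_range.1 hi)))).sub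
      stronglyMeasurable_const
  have hintM : ∀ n, Integrable (M n) μ :=
    fun n => integrable_finset_sum _ fun i _ => (hintB i).sub (integrable_const p)
  have hindp : ∀ n : ℕ, Indep (MeasurableSpace.comap (X (n+1)) Real.measurableSpace) (ℱ n) μ := by
    intro n
    have hle : ∀ i, MeasurableSpace.comap (X i) Real.measurableSpace ≤ _ :=
      fun i => (hmeas i).comap_le
    have hdis : Disjoint ({n+1} : Set ℕ) (Set.Iic n) := by
      simp only [Set.disjoint_left, Set.mem_singleton_iff, Set.mem_Iic]
      rintro a rfl
      omega
    have h := indep_iSup_of_disjoint hle ((iIndepFun_iff_iIndep (fun _ => Real.measurableSpace) X μ).1 hindep) hdis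
    have e1 : (⨆ i ∈ ({n+1} : Set ℕ), MeasurableSpace.comap (X i) Real.measurableSpace)
        = MeasurableSpace.comap (X (n+1)) Real.measurableSpace := by
      simp
    have e2 : (⨆ i ∈ Set.Iic n, MeasurableSpace.comap (X i) Real.measurableSpace) = ℱ n := rfl
    rwa [e1, e2] at h
  have hmart : Martingale M ℱ μ := by
    refine martingale_nat hadp hintM (fun n => ?_)
    have hMsucc : M (n+1) = M n + fun ω => B (n+1) ω - p := by
      funext ω
      exact Finset.sum_range_succ _ _
    have hintD : Integrable (fun ω => B (n+1) ω - p) μ := (hintB (n+1)).sub (integrable_const p)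
    have h1 : μ[M (n+1)|ℱ n] =ᵐ[μ] μ[M n|ℱ n] + μ[(fun ω => B (n+1) ω - p)|ℱ n] := by
      rw [hMsucc]
      exact condExp_add (hintM n) hintD _
    have h2 : μ[M n|ℱ n] = M n := condExp_of_stronglyMeasurable (ℱ.le n) (hadp n) (hintM n)
    have h3 : μ[(fun ω => B (n+1) ω - p)|ℱ n] =ᵐ[μ] fun _ => μ[fun ω => B (n+1) ω - p] :=
      condExp_indep_eq (hmeas (n+1)).comap_le (ℱ.le n)
        ((hsmB (n+1)).sub stronglyMeasurable_const) (hindp n)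
    have h4 : μ[fun ω => B (n+1) ω - p] = 0 := by
      rw [integral_sub (hintB (n+1)) (integrable_const p), hmeanB (n+1), integral_const]
      simp
    filter_upwards [h1, h3] with ω e1 e3
    rw [e1, Pi.add_apply, h2, e3, h4, add_zero]
  have hbdd : ∀ᵐ ω ∂μ, ∀ i, |M (i+1) ω - M i ω| ≤ ((1:ℝ≥0) : ℝ) := by
    refine Eventually.of_forall (fun ω i => ?_)
    rw [hMdiff i ω]
    rcases hB01 (i+1) ω with h | h <;> rw [h] <;> rw [abs_le] <;> constructor <;>
      push_cast <;> linarith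
  filter_upwards [hmart.submartingale.bddAbove_iff_exists_tendsto hbdd] with ω hiff
  have hnc : ¬ ∃ c, Tendsto (fun n => M n ω) atTop (𝓝 c) := by
    rintro ⟨c, hc⟩
    have h2 : Tendsto (fun n => M (n+1) ω) atTop (𝓝 c) := hc.comp (tendsto_add_atTop_nat 1)
    have h3 : Tendsto (fun n => M (n+1) ω - M n ω) atTop (𝓝 0) := by
      simpa using h2.sub hc
    have h3' : Tendsto (fun n => |M (n+1) ω - M n ω|) atTop (𝓝 0) := by
      simpa using h3.abs
    have hδ : (0:ℝ) < min p (1-p) := lt_min h0 (by linarith)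
    obtain ⟨n, hn⟩ := (h3'.eventually_lt_const hδ).exists
    have h4 : min p (1-p) ≤ |M (n+1) ω - M n ω| := by
      rw [hMdiff n ω]
      rcases hB01 (n+1) ω with h | h <;> rw [h]
      · rw [abs_of_nonneg (by linarith)]
        exact min_le_right _ _
      · rw [show (0:ℝ) - p = -p by ring, abs_neg, abs_of_nonneg (le_of_lt h0)]
        exact min_le_left _ _
    linarith
  have hnb : ¬ BddAbove (Set.range fun n => M n ω) := fun hb => hnc (hiff.1 hb)
  have hfreq : ∃ᶠ n in atTop, 0 ≤ M n ω := by
    by_contra h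
    rw [not_frequently] at h
    obtain ⟨N, hN⟩ := eventually_atTop.1 h
    apply hnb
    have hsub : (Set.range fun n => M n ω) ⊆ ((fun n => M n ω) '' (Set.Iio N)) ∪ Set.Iic 0 := by
      rintro y ⟨n, rfl⟩
      rcases lt_or_ge n N with h' | h'
      · exact Or.inl ⟨n, h', rfl⟩
      · exact Or.inr (le_of_lt (not_le.1 (hN n h')))
    exact (((Set.finite_Iio N).image _).bddAbove.union bddAbove_Iic).mono hsub
  rw [frequently_atTop] at hfreq ⊢
  intro a
  obtain ⟨n, hn, h0n⟩ := hfreq a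
  refine ⟨n+1, le_trans hn (Nat.le_succ n), ?_⟩
  have hsum : 0 ≤ (∑ i ∈ Finset.range (n+1), B i ω) - (n+1) * p := by
    have := h0n
    rw [hMdef] at this
    simp only [Finset.sum_sub_distrib, Finset.sum_const, Finset.card_range,
      nsmul_eq_mul] at this
    push_cast at this ⊢
    linarith
  rw [edf_eq_sum]
  have hBsum : ∑ i ∈ Finset.range (n+1), (if X i ω ≤ x then (1:ℝ) else 0)
      = ∑ i ∈ Finset.range (n+1), B i ω := by
    refine Finset.sum_congr rfl (fun i _ => ?_)
    simp [hBdef, hgdef, Set.indicator_apply, Set.mem_Iic]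
  rw [hBsum, le_div_iff₀ (by positivity : (0:ℝ) < ((n+1 : ℕ) : ℝ))]
  push_cast
  linarith

end freq

/-- Almost surely, the liminf of the left sample quantiles equals `lq F p`. -/
theorem liminf_left_sample_quantile
    {Ω : Type*} [MeasurableSpace Ω] (μ : Measure Ω) [IsProbabilityMeasure μ]
    (X : ℕ → Ω → ℝ) (hmeas : ∀ i, Measurable (X i))
    (hindep : iIndepFun X μ)
    (hident : ∀ i, IdentDistrib (X i) (X 0) μ μ)
    (F : ℝ → ℝ) (hF : ∀ x, F x = (μ {ω | X 0 ω ≤ x}).toReal)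
    (p : ℝ) (hp : p ∈ Set.Ioo (0 : ℝ) 1) :
    ∀ᵐ ω ∂μ, Filter.liminf (fun n => lq (edf X n ω) p) atTop = lq F p := by
  classical
  set ν : Measure ℝ := μ.map (X 0) with hν
  haveI : IsProbabilityMeasure ν := Measure.isProbabilityMeasure_map (hmeas 0).aemeasurable
  have hFc : ∀ x, F x = cdf ν x := by
    intro x
    rw [hF, cdf_eq_real, measureReal_def, hν, Measure.map_apply (hmeas 0) measurableSet_Iic]
    rfl
  have hFmono : Monotone F := by
    intro a b hab
    rw [hFc a, hFc b]
    exact monotone_cdf ν hab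
  have hne : {x : ℝ | p ≤ F x}.Nonempty := by
    obtain ⟨x, hx⟩ := ((tendsto_cdf_atTop ν).eventually_const_le hp.2).exists
    exact ⟨x, by rw [Set.mem_setOf_eq, hFc]; exact hx⟩
  have hbdd : BddBelow {x : ℝ | p ≤ F x} := by
    obtain ⟨a, ha⟩ := eventually_atBot.1 ((tendsto_cdf_atBot ν).eventually_lt_const hp.1)
    refine ⟨a, fun y hy => ?_⟩
    by_contra hya
    push_neg at hya
    have hFy : F y < p := by rw [hFc]; exact ha y hya.le
    exact absurd hy (not_le.2 hFy)
  set q : ℝ := lq F p with hq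
  have hqlt : ∀ r : ℝ, r < q → F r < p := by
    intro r hr
    by_contra h
    push_neg at h
    exact absurd (csInf_le hbdd h) (not_le.2 hr)
  have hqge : ∀ r : ℝ, q < r → p ≤ F r := by
    intro r hr
    obtain ⟨y, hy, hyr⟩ := (csInf_lt_iff hbdd hne).1 hr
    exact le_trans hy (hFmono hyr.le)
  have H1 : ∀ᵐ ω ∂μ, ∀ r : ℚ, (r:ℝ) < q → ∀ᶠ n in atTop, edf X n ω r < p := by
    rw [ae_all_iff]
    intro r
    filter_upwards [edf_tendsto hmeas hindep hident r] with ω hω hr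
    exact hω.eventually_lt_const (by rw [← hF]; exact hqlt _ hr)
  have H2 : ∀ᵐ ω ∂μ, ∀ r : ℚ, q < (r:ℝ) → ∃ᶠ n in atTop, p ≤ edf X n ω r := by
    rw [ae_all_iff]
    intro r
    by_cases hr : q < (r:ℝ)
    · have hge : p ≤ F r := hqge _ hr
      rcases eq_or_lt_of_le hge with heq | hlt
      · have h0' : 0 < (μ {ω | X 0 ω ≤ (r:ℝ)}).toReal := by rw [← hF]; rw [← heq]; exact hp.1
        have h1' : (μ {ω | X 0 ω ≤ (r:ℝ)}).toReal < 1 := by rw [← hF]; rw [← heq]; exact hp.2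
        filter_upwards [edf_freq hmeas hindep hident r h0' h1'] with ω hω _
        refine hω.mono fun n hn => ?_
        rwa [← hF, ← heq] at hn
      · filter_upwards [edf_tendsto hmeas hindep hident r] with ω hω _
        have : ∀ᶠ n in atTop, p ≤ edf X n ω r :=
          (hω.eventually_const_lt (by rwa [← hF])).mono fun n hn => hn.le
        exact this.frequently
    · filter_upwards with ω hr'
      exact absurd hr' hr
  filter_upwards [H1, H2] with ω h1 h2
  set L : ℕ → ℝ := fun n => lq (edf X n ω) p with hL
  have hlow : ∀ r : ℚ, (r:ℝ) < q → ∀ᶠ n in atTop, (r:ℝ) ≤ L n := by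
    intro r hr
    filter_upwards [h1 r hr, eventually_ne_atTop 0] with n hn hn0
    exact le_lq_edf hn0 hp.2.le hn
  have hhigh : ∀ r : ℚ, q < (r:ℝ) → ∃ᶠ n in atTop, L n ≤ (r:ℝ) := by
    intro r hr
    exact ((h2 r hr).and_eventually (eventually_ne_atTop 0)).mono
      fun n hn => lq_edf_le hp.1 hn.1
  obtain ⟨r0, hr0⟩ := exists_rat_lt q
  obtain ⟨r1, hr1⟩ := exists_rat_gt q
  have hbd : IsBoundedUnder (· ≥ ·) atTop L := ⟨(r0:ℝ), by
    rw [eventually_map]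
    exact hlow r0 hr0⟩
  have hcb : IsCoboundedUnder (· ≥ ·) atTop L :=
    IsCoboundedUnder.of_frequently_le (hhigh r1 hr1)
  refine le_antisymm ?_ ?_
  · by_contra h
    push_neg at h
    obtain ⟨r, hqr, hrl⟩ := exists_rat_btwn h
    exact absurd (liminf_le_of_frequently_le (hhigh r hqr) hbd) (not_le.2 hrl)
  · by_contra h
    push_neg at h
    obtain ⟨r, hlr, hrq⟩ := exists_rat_btwn h
    exact absurd (le_liminf_of_le hcb (hlow r hrq)) (not_le.2 hlr)
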